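/- There is a universal constant C > 0 with the following property. Let r, R, δ, Δ > 0 satisfy 2δ ≤ r and 2Δ ≤ R, and let ξ₀ ∈ ℝ³ with ξ₀ ≠ 0. Then the Lebesgue measure of the intersection S_δ(r) ∩ (ξ₀ + S_Δ(R)) is at most C·rRδΔ/|ξ₀|, where S_δ(r) = {ξ ∈ ℝ³ : r − δ ≤ |ξ| ≤ r + δ} and ξ₀ + S_Δ(R) = {ξ₀ + η : η ∈ S_Δ(R)}. -/

import Mathlib

open MeasureTheory Set
open scoped ENNReal

noncomputable section

abbrev E3 : Type := EuclideanSpace ℝ (Fin 3)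

/-- The δ-thickened sphere of radius `r` centered at the origin. -/
def thickSphere (r δ : ℝ) : Set E3 := {ξ | r - δ ≤ ‖ξ‖ ∧ ‖ξ‖ ≤ r + δ}

namespace ThickAux

open Metric Real
open scoped RealInnerProductSpace

lemma norm_sq_e2 (z : EuclideanSpace ℝ (Fin 2)) : ‖z‖ ^ 2 = z 0 ^ 2 + z 1 ^ 2 := by
  rw [EuclideanSpace.norm_eq, Real.sq_sqrt (by positivity)]
  simp [Fin.sum_univ_two, Real.norm_eq_abs, sq_abs]

lemma norm_sq_e3 (z : EuclideanSpace ℝ (Fin 3)) :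
    ‖z‖ ^ 2 = z 0 ^ 2 + z 1 ^ 2 + z 2 ^ 2 := by
  rw [EuclideanSpace.norm_eq, Real.sq_sqrt (by positivity)]
  simp [Fin.sum_univ_three, Real.norm_eq_abs, sq_abs]

lemma ann2 (c d : ℝ) (hcd : c ≤ d) :
    volume {z : EuclideanSpace ℝ (Fin 2) | c ≤ ‖z‖ ^ 2 ∧ ‖z‖ ^ 2 ≤ d} ≤
      ENNReal.ofReal (π * (d - c)) := by
  rcases lt_or_ge d 0 with hd | hd
  · have he : {z : EuclideanSpace ℝ (Fin 2) | c ≤ ‖z‖ ^ 2 ∧ ‖z‖ ^ 2 ≤ d} = ∅ := by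
      ext z
      simp only [mem_setOf_eq, mem_empty_iff_false, iff_false, not_and, not_le]
      intro _
      nlinarith [sq_nonneg ‖z‖]
    rw [he, measure_empty]
    exact zero_le
  · set c' : ℝ := max c 0 with hc'
    have hc'0 : 0 ≤ c' := le_max_right _ _
    have hc'd : c' ≤ d := max_le hcd hd
    have hsub : {z : EuclideanSpace ℝ (Fin 2) | c ≤ ‖z‖ ^ 2 ∧ ‖z‖ ^ 2 ≤ d} ⊆
        closedBall 0 (Real.sqrt d) \ ball 0 (Real.sqrt c') := by
      rintro z ⟨h1, h2⟩
      constructor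
      · rw [mem_closedBall_zero_iff]
        exact (Real.le_sqrt (norm_nonneg z) hd).2 h2
      · rw [mem_ball_zero_iff, not_lt]
        calc Real.sqrt c' ≤ Real.sqrt (‖z‖ ^ 2) :=
              Real.sqrt_le_sqrt (max_le h1 (sq_nonneg _))
          _ = ‖z‖ := Real.sqrt_sq (norm_nonneg z)
    have hball : volume (ball (0 : EuclideanSpace ℝ (Fin 2)) (Real.sqrt c'))
        = ENNReal.ofReal (π * c') := by
      rw [EuclideanSpace.volume_ball]
      simp only [Fintype.card_fin]
      rw [← ENNReal.ofReal_pow (Real.sqrt_nonneg _), Real.sq_sqrt hc'0,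
        Real.sq_sqrt pi_nonneg, ← ENNReal.ofReal_mul hc'0]
      norm_num [Real.Gamma_two, mul_comm]
    have hcball : volume (closedBall (0 : EuclideanSpace ℝ (Fin 2)) (Real.sqrt d))
        = ENNReal.ofReal (π * d) := by
      rw [EuclideanSpace.volume_closedBall]
      simp only [Fintype.card_fin]
      rw [← ENNReal.ofReal_pow (Real.sqrt_nonneg _), Real.sq_sqrt hd,
        Real.sq_sqrt pi_nonneg, ← ENNReal.ofReal_mul hd]
      norm_num [Real.Gamma_two, mul_comm]
    calc volume {z : EuclideanSpace ℝ (Fin 2) | c ≤ ‖z‖ ^ 2 ∧ ‖z‖ ^ 2 ≤ d}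
        ≤ volume (closedBall 0 (Real.sqrt d) \ ball 0 (Real.sqrt c')) := measure_mono hsub
      _ = volume (closedBall (0 : EuclideanSpace ℝ (Fin 2)) (Real.sqrt d))
            - volume (ball (0 : EuclideanSpace ℝ (Fin 2)) (Real.sqrt c')) :=
          measure_diff (ball_subset_closedBall.trans
              (closedBall_subset_closedBall (Real.sqrt_le_sqrt hc'd)))
            measurableSet_ball.nullMeasurableSet measure_ball_lt_top.ne
      _ = ENNReal.ofReal (π * d) - ENNReal.ofReal (π * c') := by rw [hcball, hball]
      _ = ENNReal.ofReal (π * d - π * c') := (ENNReal.ofReal_sub _ (by positivity)).symm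
      _ ≤ ENNReal.ofReal (π * (d - c)) := by
          apply ENNReal.ofReal_le_ofReal
          have : c ≤ c' := le_max_left _ _
          nlinarith [Real.pi_pos]

lemma annPi (c d : ℝ) (hcd : c ≤ d) :
    volume {y : Fin 2 → ℝ | c ≤ y 0 ^ 2 + y 1 ^ 2 ∧ y 0 ^ 2 + y 1 ^ 2 ≤ d} ≤
      ENNReal.ofReal (π * (d - c)) := by
  have hf : Measurable fun y : Fin 2 → ℝ => y 0 ^ 2 + y 1 ^ 2 :=
    ((measurable_pi_apply 0).pow_const 2).add ((measurable_pi_apply 1).pow_const 2)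
  have hmeas : MeasurableSet {y : Fin 2 → ℝ | c ≤ y 0 ^ 2 + y 1 ^ 2 ∧ y 0 ^ 2 + y 1 ^ 2 ≤ d} := by
    rw [setOf_and]
    exact (measurableSet_le measurable_const hf).inter (measurableSet_le hf measurable_const)
  have h := (EuclideanSpace.volume_preserving_symm_measurableEquiv_toLp (Fin 2)).measure_preimage
    hmeas.nullMeasurableSet
  rw [← h]
  have hset : (MeasurableEquiv.toLp 2 (Fin 2 → ℝ)).symm ⁻¹'
      {y : Fin 2 → ℝ | c ≤ y 0 ^ 2 + y 1 ^ 2 ∧ y 0 ^ 2 + y 1 ^ 2 ≤ d}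
      = {z : EuclideanSpace ℝ (Fin 2) | c ≤ ‖z‖ ^ 2 ∧ ‖z‖ ^ 2 ≤ d} := by
    ext z
    simp only [mem_preimage, mem_setOf_eq, norm_sq_e2 z]
    rfl
  rw [hset]
  exact ann2 c d hcd

lemma prodBound (r δ α β : ℝ) (hδ : 0 ≤ δ) (hδr : δ ≤ r) :
    volume {p : ℝ × (Fin 2 → ℝ) | p.1 ∈ Icc α β ∧
        (r - δ) ^ 2 ≤ p.1 ^ 2 + (p.2 0 ^ 2 + p.2 1 ^ 2) ∧
        p.1 ^ 2 + (p.2 0 ^ 2 + p.2 1 ^ 2) ≤ (r + δ) ^ 2} ≤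
      ENNReal.ofReal (4 * π * r * δ * (β - α)) := by
  set T : Set (ℝ × (Fin 2 → ℝ)) := {p | p.1 ∈ Icc α β ∧
        (r - δ) ^ 2 ≤ p.1 ^ 2 + (p.2 0 ^ 2 + p.2 1 ^ 2) ∧
        p.1 ^ 2 + (p.2 0 ^ 2 + p.2 1 ^ 2) ≤ (r + δ) ^ 2} with hT
  have hg : Measurable fun p : ℝ × (Fin 2 → ℝ) => p.1 ^ 2 + (p.2 0 ^ 2 + p.2 1 ^ 2) := by
    apply (measurable_fst.pow_const 2).add
    exact (((measurable_pi_apply 0).comp measurable_snd).pow_const 2).add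
      (((measurable_pi_apply 1).comp measurable_snd).pow_const 2)
  have hmeas : MeasurableSet T := by
    rw [hT, setOf_and, setOf_and]
    exact ((measurable_fst measurableSet_Icc)).inter
      ((measurableSet_le measurable_const hg).inter (measurableSet_le hg measurable_const))
  have hr0 : (0:ℝ) ≤ r := hδ.trans hδr
  have hc4 : (0:ℝ) ≤ π * ((r + δ) ^ 2 - (r - δ) ^ 2) := by
    nlinarith [Real.pi_pos, mul_nonneg hr0 hδ]
  have hslice : ∀ t : ℝ, volume (Prod.mk t ⁻¹' T) ≤
      (Icc α β).indicator (fun _ => ENNReal.ofReal (π * ((r + δ) ^ 2 - (r - δ) ^ 2))) t := by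
    intro t
    by_cases ht : t ∈ Icc α β
    · rw [indicator_of_mem ht]
      have hsub : Prod.mk t ⁻¹' T ⊆ {y : Fin 2 → ℝ |
          (r - δ) ^ 2 - t ^ 2 ≤ y 0 ^ 2 + y 1 ^ 2 ∧ y 0 ^ 2 + y 1 ^ 2 ≤ (r + δ) ^ 2 - t ^ 2} := by
        rintro y ⟨_, h1, h2⟩
        exact ⟨by linarith, by linarith⟩
      refine (measure_mono hsub).trans ?_
      refine (annPi _ _ (by nlinarith)).trans_eq ?_
      congr 1
      ring
    · rw [indicator_of_notMem ht]
      have he : Prod.mk t ⁻¹' T = ∅ := by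
        ext y
        simp only [hT, mem_preimage, mem_setOf_eq, mem_empty_iff_false, iff_false, not_and]
        intro h
        exact absurd h ht
      simp [he]
  calc volume T = ∫⁻ t, volume (Prod.mk t ⁻¹' T) := by
        rw [MeasureTheory.Measure.volume_eq_prod, Measure.prod_apply hmeas]
    _ ≤ ∫⁻ t, (Icc α β).indicator
          (fun _ => ENNReal.ofReal (π * ((r + δ) ^ 2 - (r - δ) ^ 2))) t :=
        lintegral_mono hslice
    _ = ENNReal.ofReal (π * ((r + δ) ^ 2 - (r - δ) ^ 2)) * volume (Icc α β) := by
        rw [lintegral_indicator_const measurableSet_Icc]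
    _ = ENNReal.ofReal (π * ((r + δ) ^ 2 - (r - δ) ^ 2)) * ENNReal.ofReal (β - α) := by
        rw [Real.volume_Icc]
    _ = ENNReal.ofReal (π * ((r + δ) ^ 2 - (r - δ) ^ 2) * (β - α)) :=
        (ENNReal.ofReal_mul hc4).symm
    _ = ENNReal.ofReal (4 * π * r * δ * (β - α)) := by
        congr 1
        ring

lemma slabBound (r δ α β : ℝ) (hδ : 0 ≤ δ) (hδr : δ ≤ r) (u : E3) (hu : ‖u‖ = 1) :
    volume {ξ : E3 | (r - δ ≤ ‖ξ‖ ∧ ‖ξ‖ ≤ r + δ) ∧ ⟪u, ξ⟫ ∈ Icc α β} ≤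
      ENNReal.ofReal (4 * π * r * δ * (β - α)) := by
  have hcard : Module.finrank ℝ E3 = Fintype.card (Fin 3) := by
    simp [finrank_euclideanSpace]
  have hon : Orthonormal ℝ (({2} : Set (Fin 3)).restrict (fun _ : Fin 3 => u)) := by
    constructor
    · intro i
      exact hu
    · intro i j hij
      exact absurd (Subtype.ext (i.2.trans j.2.symm)) hij
  obtain ⟨b, hb⟩ := hon.exists_orthonormalBasis_extension_of_card_eq hcard
  have hb2 : b 2 = u := hb 2 rfl
  set f : E3 → ℝ × (Fin 2 → ℝ) := fun ξ =>
    (MeasurableEquiv.piFinSuccAbove (fun _ => ℝ) 2)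
      ((MeasurableEquiv.toLp 2 (Fin 3 → ℝ)).symm (b.repr ξ)) with hf
  have hmp : MeasurePreserving f volume volume :=
    (volume_preserving_piFinSuccAbove (fun _ => ℝ) 2).comp
      ((EuclideanSpace.volume_preserving_symm_measurableEquiv_toLp (Fin 3)).comp
        b.measurePreserving_repr)
  have hf1 : ∀ ξ : E3, (f ξ).1 = b.repr ξ 2 := fun ξ => rfl
  have hf2 : ∀ (ξ : E3) (j : Fin 2), (f ξ).2 j = b.repr ξ ((2 : Fin 3).succAbove j) :=
    fun ξ j => rfl
  set T : Set (ℝ × (Fin 2 → ℝ)) := {p | p.1 ∈ Icc α β ∧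
        (r - δ) ^ 2 ≤ p.1 ^ 2 + (p.2 0 ^ 2 + p.2 1 ^ 2) ∧
        p.1 ^ 2 + (p.2 0 ^ 2 + p.2 1 ^ 2) ≤ (r + δ) ^ 2} with hT
  have hg : Measurable fun p : ℝ × (Fin 2 → ℝ) => p.1 ^ 2 + (p.2 0 ^ 2 + p.2 1 ^ 2) := by
    apply (measurable_fst.pow_const 2).add
    exact (((measurable_pi_apply 0).comp measurable_snd).pow_const 2).add
      (((measurable_pi_apply 1).comp measurable_snd).pow_const 2)
  have hmeas : MeasurableSet T := by
    rw [hT, setOf_and, setOf_and]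
    exact ((measurable_fst measurableSet_Icc)).inter
      ((measurableSet_le measurable_const hg).inter (measurableSet_le hg measurable_const))
  have hsub : {ξ : E3 | (r - δ ≤ ‖ξ‖ ∧ ‖ξ‖ ≤ r + δ) ∧ ⟪u, ξ⟫ ∈ Icc α β} ⊆ f ⁻¹' T := by
    rintro ξ ⟨⟨h1, h2⟩, hin⟩
    have hrepr2 : b.repr ξ 2 = ⟪u, ξ⟫ := by
      rw [← hb2]
      exact b.repr_apply_apply ξ 2
    have hnsq : (f ξ).1 ^ 2 + ((f ξ).2 0 ^ 2 + (f ξ).2 1 ^ 2) = ‖ξ‖ ^ 2 := by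
      rw [hf1, hf2, hf2]
      have hs0 : (2 : Fin 3).succAbove (0 : Fin 2) = 0 := by decide
      have hs1 : (2 : Fin 3).succAbove (1 : Fin 2) = 1 := by decide
      rw [hs0, hs1, ← b.repr.norm_map ξ, norm_sq_e3]
      ring
    have h1' : (r - δ) ^ 2 ≤ ‖ξ‖ ^ 2 := pow_le_pow_left₀ (by linarith) h1 2
    have h2' : ‖ξ‖ ^ 2 ≤ (r + δ) ^ 2 := pow_le_pow_left₀ (norm_nonneg ξ) h2 2
    refine ⟨?_, ?_, ?_⟩
    · rw [hf1, hrepr2]; exact hin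
    · rw [hnsq]; exact h1'
    · rw [hnsq]; exact h2'
  calc volume {ξ : E3 | (r - δ ≤ ‖ξ‖ ∧ ‖ξ‖ ≤ r + δ) ∧ ⟪u, ξ⟫ ∈ Icc α β}
      ≤ volume (f ⁻¹' T) := measure_mono hsub
    _ = volume T := hmp.measure_preimage hmeas.nullMeasurableSet
    _ ≤ ENNReal.ofReal (4 * π * r * δ * (β - α)) := prodBound r δ α β hδ hδr

lemma oneSided (r R δ Δ : ℝ) (hr : 0 < r) (hR : 0 < R) (hδ : 0 < δ) (hΔ : 0 < Δ)
    (hδr : 2 * δ ≤ r) (hΔR : 2 * Δ ≤ R) (ξ₀ : E3) (hξ : ξ₀ ≠ 0) :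
    volume (thickSphere r δ ∩ ((fun η => ξ₀ + η) '' thickSphere R Δ)) ≤
      ENNReal.ofReal (8 * π * (r * δ) * (r * δ + R * Δ) / ‖ξ₀‖) := by
  set a : ℝ := ‖ξ₀‖ with ha
  have ha0 : 0 < a := norm_pos_iff.2 hξ
  set u : E3 := a⁻¹ • ξ₀ with hu'
  have hu : ‖u‖ = 1 := by
    rw [hu', norm_smul, norm_inv, norm_norm, ← ha, inv_mul_cancel₀ ha0.ne']
  set α : ℝ := ((r - δ) ^ 2 + a ^ 2 - (R + Δ) ^ 2) / (2 * a) with hα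
  set β : ℝ := ((r + δ) ^ 2 + a ^ 2 - (R - Δ) ^ 2) / (2 * a) with hβ
  have hsub : thickSphere r δ ∩ ((fun η => ξ₀ + η) '' thickSphere R Δ) ⊆
      {ξ : E3 | (r - δ ≤ ‖ξ‖ ∧ ‖ξ‖ ≤ r + δ) ∧ ⟪u, ξ⟫ ∈ Icc α β} := by
    rintro ξ ⟨⟨h1, h2⟩, η, ⟨h3, h4⟩, hξη⟩
    have hξη' : ξ₀ + η = ξ := hξη
    have hη : η = ξ - ξ₀ := eq_sub_of_add_eq' hξη'
    rw [hη] at h3 h4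
    have hns := norm_sub_sq_real ξ ξ₀
    rw [← ha] at hns
    have hinner : ⟪u, ξ⟫ = (‖ξ‖ ^ 2 + a ^ 2 - ‖ξ - ξ₀‖ ^ 2) / (2 * a) := by
      rw [hu', real_inner_smul_left, real_inner_comm ξ ξ₀]
      rw [eq_div_iff (by positivity)]
      have hinv : a⁻¹ * a = 1 := inv_mul_cancel₀ ha0.ne'
      nlinarith [hns]
    have hr1 : (r - δ) ^ 2 ≤ ‖ξ‖ ^ 2 := pow_le_pow_left₀ (by linarith) h1 2
    have hr2 : ‖ξ‖ ^ 2 ≤ (r + δ) ^ 2 := pow_le_pow_left₀ (norm_nonneg ξ) h2 2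
    have hR1 : (R - Δ) ^ 2 ≤ ‖ξ - ξ₀‖ ^ 2 := pow_le_pow_left₀ (by linarith) h3 2
    have hR2 : ‖ξ - ξ₀‖ ^ 2 ≤ (R + Δ) ^ 2 := pow_le_pow_left₀ (norm_nonneg _) h4 2
    refine ⟨⟨h1, h2⟩, ?_, ?_⟩
    · rw [hinner, hα]
      exact (div_le_div_iff_of_pos_right (by positivity)).2 (by linarith)
    · rw [hinner, hβ]
      exact (div_le_div_iff_of_pos_right (by positivity)).2 (by linarith)
  refine (measure_mono hsub).trans ((slabBound r δ α β hδ.le (by linarith) u hu).trans_eq ?_)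
  congr 1
  rw [hα, hβ]
  field_simp
  ring

end ThickAux

/-- Volume of intersection of two thickened spheres (Lemma C:Lemma1). -/
theorem thickened_spheres_intersection_volume :
    ∃ C > (0 : ℝ),
      ∀ (r R δ Δ : ℝ), 0 < r → 0 < R → 0 < δ → 0 < Δ →
        2 * δ ≤ r → 2 * Δ ≤ R →
      ∀ (ξ₀ : E3), ξ₀ ≠ 0 →
      volume (thickSphere r δ ∩ ((fun η => ξ₀ + η) '' thickSphere R Δ))
        ≤ ENNReal.ofReal (C * (r * R * δ * Δ / ‖ξ₀‖)) := by
  refine ⟨16 * Real.pi, by positivity, ?_⟩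
  intro r R δ Δ hr hR hδ hΔ hδr hΔR ξ₀ hξ
  have ha0 : (0:ℝ) < ‖ξ₀‖ := norm_pos_iff.2 hξ
  have hrw : 16 * Real.pi * (r * R * δ * Δ / ‖ξ₀‖)
      = 16 * Real.pi * (r * R * δ * Δ) / ‖ξ₀‖ := by ring
  rw [hrw]
  rcases le_total (r * δ) (R * Δ) with h | h
  · refine (ThickAux.oneSided r R δ Δ hr hR hδ hΔ hδr hΔR ξ₀ hξ).trans
      (ENNReal.ofReal_le_ofReal ?_)
    refine (div_le_div_iff_of_pos_right ha0).2 ?_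
    nlinarith [mul_nonneg (mul_nonneg Real.pi_pos.le (mul_pos hr hδ).le) (sub_nonneg.2 h)]
  · have h2 : (fun η : E3 => ξ₀ + (-ξ₀ + η)) = fun η => η := by
      funext η
      rw [← add_assoc, add_neg_cancel, zero_add]
    have him : thickSphere r δ ∩ ((fun η => ξ₀ + η) '' thickSphere R Δ)
        = (fun η => ξ₀ + η) ''
          (thickSphere R Δ ∩ ((fun η => -ξ₀ + η) '' thickSphere r δ)) := by
      rw [Set.image_inter (add_right_injective ξ₀), Set.image_image, h2, Set.image_id']
      exact Set.inter_comm _ _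
    rw [him, Set.image_add_left, measure_preimage_add]
    refine (ThickAux.oneSided R r Δ δ hR hr hΔ hδ hΔR hδr (-ξ₀) (neg_ne_zero.2 hξ)).trans
      (ENNReal.ofReal_le_ofReal ?_)
    rw [norm_neg]
    refine (div_le_div_iff_of_pos_right ha0).2 ?_
    nlinarith [mul_nonneg (mul_nonneg Real.pi_pos.le (mul_pos hR hΔ).le) (sub_nonneg.2 h)]
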